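/- arXiv:2004.03593 — 2 statements merged into one kernel-verified Lean document; each statement's English description precedes it below -/
import Mathlib

section
/- For normal, convex functions f, g : [0,1] → [0,1], the left envelope of f ⋆ g coincides with that of f ⊓ g: (f ⋆ g)^L = (f ⊓ g)^L, where ⋆ is defined by f ⋆ g = f ⊓ g if min(f(1), g(1)) = 1 and otherwise (f ⋆ g)(x) = (f ⊓ g)(x) for x < 1 and (f ⋆ g)(1) = 0 (with the convention f ⋆ 1_{1} = f, 1_{1} ⋆ g = g). -/
open Set Classical

noncomputable section

/-- Left envelope: `f^L(x) = sup {f y : 0 ≤ y ≤ x}`. -/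
def fL (f : ℝ → ℝ) (x : ℝ) : ℝ := sSup (f '' Set.Icc 0 x)

/-- Weak left envelope: `f^{Lw}(x) = sup {f y : 0 ≤ y < x}` (for `x ∈ (0,1]`). -/
def fLw (f : ℝ → ℝ) (x : ℝ) : ℝ := sSup (f '' Set.Ico 0 x)

/-- Right envelope: `f^R(x) = sup {f y : x ≤ y ≤ 1}`. -/
def fR (f : ℝ → ℝ) (x : ℝ) : ℝ := sSup (f '' Set.Icc x 1)

/-- `f` maps `[0,1]` into `[0,1]`. -/
def MapsI (f : ℝ → ℝ) : Prop := ∀ x ∈ Set.Icc (0:ℝ) 1, f x ∈ Set.Icc (0:ℝ) 1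

/-- `f` is normal: `sup f = 1` on `[0,1]`. -/
def NormalFn (f : ℝ → ℝ) : Prop := sSup (f '' Set.Icc 0 1) = 1

/-- `f` is convex: `f y ≥ min (f x) (f z)` whenever `0 ≤ x ≤ y ≤ z ≤ 1`. -/
def ConvexFn (f : ℝ → ℝ) : Prop :=
  ∀ x y z : ℝ, 0 ≤ x → x ≤ y → y ≤ z → z ≤ 1 → min (f x) (f z) ≤ f y

/-- Convolution intersection: `(f ⊓ g)(x) = sup {min (f y) (g z) : min y z = x}`. -/
def inter (f g : ℝ → ℝ) (x : ℝ) : ℝ :=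
  sSup {v | ∃ y ∈ Set.Icc (0:ℝ) 1, ∃ z ∈ Set.Icc (0:ℝ) 1, min y z = x ∧ v = min (f y) (g z)}

/-- Convolution union: `(f ⊔ g)(x) = sup {min (f y) (g z) : max y z = x}`. -/
def union (f g : ℝ → ℝ) (x : ℝ) : ℝ :=
  sSup {v | ∃ y ∈ Set.Icc (0:ℝ) 1, ∃ z ∈ Set.Icc (0:ℝ) 1, max y z = x ∧ v = min (f y) (g z)}

/-- `L₁(f) = inf {x ∈ [0,1] : f^L(x) = 1}`. -/
def L1 (f : ℝ → ℝ) : ℝ := sInf {x ∈ Set.Icc (0:ℝ) 1 | fL f x = 1}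

/-- `R¹(f) = sup {x ∈ [0,1] : f^R(x) = 1}`. -/
def R1 (f : ℝ → ℝ) : ℝ := sSup {x ∈ Set.Icc (0:ℝ) 1 | fR f x = 1}

/-- The characteristic function `1_{{1}}`. -/
def ind1 : ℝ → ℝ := fun x => if x = 1 then 1 else 0

/-- The modified intersection `f ⋆ g`. -/
def star (f g : ℝ → ℝ) : ℝ → ℝ :=
  if Set.EqOn f ind1 (Set.Icc (0:ℝ) 1) then g
  else if Set.EqOn g ind1 (Set.Icc (0:ℝ) 1) then f
  else if min (f 1) (g 1) = 1 then inter f g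
  else fun x => if x = 1 then 0 else inter f g x

section Aux

variable {f g : ℝ → ℝ}

lemma interSet_bdd (hf : MapsI f) (x : ℝ) :
    BddAbove {v | ∃ y ∈ Set.Icc (0:ℝ) 1, ∃ z ∈ Set.Icc (0:ℝ) 1,
      min y z = x ∧ v = min (f y) (g z)} := by
  refine ⟨1, ?_⟩
  rintro v ⟨y, hy, z, hz, -, rfl⟩
  exact le_trans (min_le_left _ _) (hf y hy).2

lemma min_mem_interSet {x : ℝ} (hx : x ∈ Set.Icc (0:ℝ) 1) :
    min (f x) (g x) ∈ {v | ∃ y ∈ Set.Icc (0:ℝ) 1, ∃ z ∈ Set.Icc (0:ℝ) 1,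
      min y z = x ∧ v = min (f y) (g z)} :=
  ⟨x, hx, x, hx, min_self x, rfl⟩

lemma le_inter (hf : MapsI f) {y z : ℝ} (hy : y ∈ Set.Icc (0:ℝ) 1)
    (hz : z ∈ Set.Icc (0:ℝ) 1) : min (f y) (g z) ≤ inter f g (min y z) :=
  le_csSup (interSet_bdd hf _) ⟨y, hy, z, hz, rfl, rfl⟩

lemma inter_le_one (hf : MapsI f) {x : ℝ} (hx : x ∈ Set.Icc (0:ℝ) 1) :
    inter f g x ≤ 1 := by
  apply csSup_le ⟨_, min_mem_interSet hx⟩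
  rintro v ⟨y, hy, z, hz, -, rfl⟩
  exact le_trans (min_le_left _ _) (hf y hy).2

lemma inter_nonneg (hf : MapsI f) (hg : MapsI g) {x : ℝ}
    (hx : x ∈ Set.Icc (0:ℝ) 1) : 0 ≤ inter f g x :=
  le_trans (le_min (hf x hx).1 (hg x hx).1)
    (le_csSup (interSet_bdd hf x) (min_mem_interSet hx))

lemma inter_one (hf : MapsI f) (hg : MapsI g) :
    inter f g 1 = min (f 1) (g 1) := by
  have h1 : (1:ℝ) ∈ Set.Icc (0:ℝ) 1 := ⟨zero_le_one, le_refl 1⟩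
  apply le_antisymm
  · apply csSup_le ⟨_, min_mem_interSet h1⟩
    rintro v ⟨y, hy, z, hz, hm, rfl⟩
    have hy1 : y = 1 := le_antisymm hy.2 (hm ▸ min_le_left y z)
    have hz1 : z = 1 := le_antisymm hz.2 (hm ▸ min_le_right y z)
    rw [hy1, hz1]
  · exact le_csSup (interSet_bdd hf 1) (min_mem_interSet h1)

lemma fL_congr {h1 h2 : ℝ → ℝ} (h : Set.EqOn h1 h2 (Set.Icc (0:ℝ) 1)) :
    Set.EqOn (fL h1) (fL h2) (Set.Icc (0:ℝ) 1) := by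
  intro x hx
  unfold fL
  congr 1
  apply Set.image_congr
  intro y hy
  exact h ⟨hy.1, hy.2.trans hx.2⟩

lemma inter_ind1_left (hg : MapsI g)
    (hfi : Set.EqOn f ind1 (Set.Icc (0:ℝ) 1)) {x : ℝ}
    (hx : x ∈ Set.Icc (0:ℝ) 1) : inter f g x = g x := by
  have h1 : (1:ℝ) ∈ Set.Icc (0:ℝ) 1 := ⟨zero_le_one, le_refl 1⟩
  have hf1 : f 1 = 1 := by simpa [ind1] using hfi h1
  have hmem : g x ∈ {v | ∃ y ∈ Set.Icc (0:ℝ) 1, ∃ z ∈ Set.Icc (0:ℝ) 1,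
      min y z = x ∧ v = min (f y) (g z)} := by
    refine ⟨1, h1, x, hx, min_eq_right hx.2, ?_⟩
    rw [hf1, min_eq_right (hg x hx).2]
  apply le_antisymm
  · apply csSup_le ⟨_, hmem⟩
    rintro v ⟨y, hy, z, hz, hm, rfl⟩
    by_cases hy1 : y = 1
    · have hz1 : z = x := by
        rw [hy1, min_eq_right hz.2] at hm; exact hm
      rw [hy1, hz1, hf1, min_eq_right (hg x hx).2]
    · have : f y = 0 := by simpa [ind1, hy1] using hfi hy
      rw [this]
      exact le_trans (min_le_left _ _) (hg x hx).1
  · refine le_csSup ⟨1, ?_⟩ hmem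
    rintro v ⟨y, hy, z, hz, -, rfl⟩
    exact le_trans (min_le_right _ _) (hg z hz).2

lemma inter_ind1_right (hf : MapsI f)
    (hgi : Set.EqOn g ind1 (Set.Icc (0:ℝ) 1)) {x : ℝ}
    (hx : x ∈ Set.Icc (0:ℝ) 1) : inter f g x = f x := by
  have h1 : (1:ℝ) ∈ Set.Icc (0:ℝ) 1 := ⟨zero_le_one, le_refl 1⟩
  have hg1 : g 1 = 1 := by simpa [ind1] using hgi h1
  have hmem : f x ∈ {v | ∃ y ∈ Set.Icc (0:ℝ) 1, ∃ z ∈ Set.Icc (0:ℝ) 1,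
      min y z = x ∧ v = min (f y) (g z)} := by
    refine ⟨x, hx, 1, h1, min_eq_left hx.2, ?_⟩
    rw [hg1, min_eq_left (hf x hx).2]
  apply le_antisymm
  · apply csSup_le ⟨_, hmem⟩
    rintro v ⟨y, hy, z, hz, hm, rfl⟩
    by_cases hz1 : z = 1
    · have hy1 : y = x := by
        rw [hz1, min_eq_left hy.2] at hm; exact hm
      rw [hz1, hy1, hg1, min_eq_left (hf x hx).2]
    · have : g z = 0 := by simpa [ind1, hz1] using hgi hz
      rw [this]
      exact le_trans (min_le_right _ _) (hf x hx).1
  · exact le_csSup (interSet_bdd hf x) hmem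

end Aux

/-- `(f ⋆ g)^L = (f ⊓ g)^L` on `[0,1]` for normal convex `f, g`. -/
theorem stmt_13 (f g : ℝ → ℝ) (hf : MapsI f) (hg : MapsI g)
    (hfn : NormalFn f) (hfc : ConvexFn f) (hgn : NormalFn g) (hgc : ConvexFn g) :
    Set.EqOn (fL (star f g)) (fL (inter f g)) (Set.Icc (0:ℝ) 1) := by
  have h1 : (1:ℝ) ∈ Set.Icc (0:ℝ) 1 := ⟨zero_le_one, le_refl 1⟩
  unfold _root_.star
  split_ifs with hfi hgi hmin
  · exact fL_congr fun y hy => (inter_ind1_left hg hfi hy).symm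
  · exact fL_congr fun y hy => (inter_ind1_right hf hgi hy).symm
  · exact fun _ _ => rfl
  · set S : ℝ → ℝ := fun x => if x = 1 then 0 else inter f g x with hS
    set c : ℝ := min (f 1) (g 1) with hc
    have hclt : c < 1 := lt_of_le_of_ne (le_trans (min_le_left _ _) (hf 1 h1).2) hmin
    intro x hx
    by_cases hx1 : x = 1
    · subst hx1
      have hbddI : BddAbove (inter f g '' Set.Icc (0:ℝ) 1) := by
        refine ⟨1, ?_⟩
        rintro v ⟨t, ht, rfl⟩
        exact inter_le_one hf ht
      have hbddS : BddAbove (S '' Set.Icc (0:ℝ) 1) := by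
        refine ⟨1, ?_⟩
        rintro v ⟨t, ht, rfl⟩
        by_cases ht1 : t = 1
        · simp [hS, ht1]
        · simpa [hS, ht1] using inter_le_one (g := g) hf ht
      -- find witness w < 1 with inter f g w ≥ c
      obtain ⟨a, ⟨y0, hy0, rfl⟩, hfy0⟩ :=
        exists_lt_of_lt_csSup (Set.Nonempty.image f ⟨1, h1⟩) (hfn ▸ hclt)
      obtain ⟨b, ⟨z0, hz0, rfl⟩, hgz0⟩ :=
        exists_lt_of_lt_csSup (Set.Nonempty.image g ⟨1, h1⟩) (hgn ▸ hclt)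
      set w : ℝ := min y0 z0 with hw
      have hwmem : w ∈ Set.Icc (0:ℝ) 1 :=
        ⟨le_min hy0.1 hz0.1, le_trans (min_le_left _ _) hy0.2⟩
      have hw1 : w ≠ 1 := by
        intro hweq
        have hy1 : y0 = 1 := le_antisymm hy0.2 (hweq ▸ min_le_left y0 z0)
        have hz1 : z0 = 1 := le_antisymm hz0.2 (hweq ▸ min_le_right y0 z0)
        rw [hy1] at hfy0
        rw [hz1] at hgz0
        exact absurd (lt_min hfy0 hgz0) (lt_irrefl c)
      have hcw : c ≤ inter f g w :=
        le_trans (le_min hfy0.le hgz0.le) (le_inter hf hy0 hz0)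
      show sSup (S '' Set.Icc 0 1) = sSup (inter f g '' Set.Icc 0 1)
      apply le_antisymm
      · apply csSup_le (Set.Nonempty.image S ⟨1, h1⟩)
        rintro v ⟨t, ht, rfl⟩
        by_cases ht1 : t = 1
        · have : (0:ℝ) ≤ inter f g 1 := inter_nonneg hf hg h1
          calc S t = 0 := by simp [hS, ht1]
            _ ≤ inter f g 1 := this
            _ ≤ _ := le_csSup hbddI ⟨1, h1, rfl⟩
        · calc S t = inter f g t := by simp [hS, ht1]
            _ ≤ _ := le_csSup hbddI ⟨t, ht, rfl⟩
      · apply csSup_le (Set.Nonempty.image _ ⟨1, h1⟩)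
        rintro v ⟨t, ht, rfl⟩
        by_cases ht1 : t = 1
        · calc inter f g t = c := by rw [ht1]; exact inter_one hf hg
            _ ≤ inter f g w := hcw
            _ = S w := by simp [hS, hw1]
            _ ≤ _ := le_csSup hbddS ⟨w, hwmem, rfl⟩
        · calc inter f g t = S t := by simp [hS, ht1]
            _ ≤ _ := le_csSup hbddS ⟨t, ht, rfl⟩
    · -- x < 1 : the functions agree on [0, x]
      have hxlt : x < 1 := lt_of_le_of_ne hx.2 hx1
      show sSup (S '' Set.Icc 0 x) = sSup (inter f g '' Set.Icc 0 x)
      congr 1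
      apply Set.image_congr
      intro y hy
      have : y ≠ 1 := ne_of_lt (lt_of_le_of_lt hy.2 hxlt)
      simp [hS, this]
end
end

section
/- The operation ⋆ distributes over the convolution union: f ⋆ (g ⊔ h) = (f ⋆ g) ⊔ (f ⋆ h) for all normal, convex f, g, h : [0,1] → [0,1]. -/
open Set Classical

noncomputable section

-- AUXILIARY LEMMAS

lemma aux_min_sSup_le {S : Set ℝ} {a B : ℝ} (hne : S.Nonempty) (h : ∀ s ∈ S, min a s ≤ B) :
    min a (sSup S) ≤ B := by
  by_cases hab : a ≤ B
  · exact le_trans (min_le_left _ _) hab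
  · have hS : sSup S ≤ B := by
      apply csSup_le hne
      intro s hs
      rcases min_choice a s with hc | hc
      · exact absurd (hc ▸ h s hs) hab
      · have := h s hs; rwa [hc] at this
    exact le_trans (min_le_right _ _) hS

lemma aux_min_sSup_sSup_le {P Q : Set ℝ} {B : ℝ} (hP : P.Nonempty) (hQ : Q.Nonempty)
    (h : ∀ p ∈ P, ∀ q ∈ Q, min p q ≤ B) : min (sSup P) (sSup Q) ≤ B := by
  rw [min_comm]
  apply aux_min_sSup_le hP
  intro p hp
  rw [min_comm]
  exact aux_min_sSup_le hQ (fun q hq => h p hp q hq)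

lemma aux_union_bdd (f g : ℝ → ℝ) (hf : MapsI f) (x : ℝ) :
    BddAbove {v | ∃ y ∈ Set.Icc (0:ℝ) 1, ∃ z ∈ Set.Icc (0:ℝ) 1, max y z = x ∧ v = min (f y) (g z)} := by
  refine ⟨1, ?_⟩
  rintro v ⟨y, hy, z, hz, -, rfl⟩
  exact le_trans (min_le_left _ _) (hf y hy).2

lemma aux_inter_bdd (f g : ℝ → ℝ) (hf : MapsI f) (x : ℝ) :
    BddAbove {v | ∃ y ∈ Set.Icc (0:ℝ) 1, ∃ z ∈ Set.Icc (0:ℝ) 1, min y z = x ∧ v = min (f y) (g z)} := by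
  refine ⟨1, ?_⟩
  rintro v ⟨y, hy, z, hz, -, rfl⟩
  exact le_trans (min_le_left _ _) (hf y hy).2

lemma aux_le_union {f g : ℝ → ℝ} (hf : MapsI f) {x y z : ℝ} (hy : y ∈ Set.Icc (0:ℝ) 1)
    (hz : z ∈ Set.Icc (0:ℝ) 1) (hm : max y z = x) : min (f y) (g z) ≤ union f g x :=
  le_csSup (aux_union_bdd f g hf x) ⟨y, hy, z, hz, hm, rfl⟩

lemma aux_le_inter {f g : ℝ → ℝ} (hf : MapsI f) {x y z : ℝ} (hy : y ∈ Set.Icc (0:ℝ) 1)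
    (hz : z ∈ Set.Icc (0:ℝ) 1) (hm : min y z = x) : min (f y) (g z) ≤ inter f g x :=
  le_csSup (aux_inter_bdd f g hf x) ⟨y, hy, z, hz, hm, rfl⟩

lemma aux_union_le {f g : ℝ → ℝ} {x B : ℝ} (hx : x ∈ Set.Icc (0:ℝ) 1)
    (hB : ∀ y ∈ Set.Icc (0:ℝ) 1, ∀ z ∈ Set.Icc (0:ℝ) 1, max y z = x → min (f y) (g z) ≤ B) :
    union f g x ≤ B := by
  refine csSup_le ⟨min (f x) (g x), x, hx, x, hx, max_self x, rfl⟩ ?_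
  rintro v ⟨y, hy, z, hz, hm, rfl⟩
  exact hB y hy z hz hm

lemma aux_inter_le {f g : ℝ → ℝ} {x B : ℝ} (hx : x ∈ Set.Icc (0:ℝ) 1)
    (hB : ∀ y ∈ Set.Icc (0:ℝ) 1, ∀ z ∈ Set.Icc (0:ℝ) 1, min y z = x → min (f y) (g z) ≤ B) :
    inter f g x ≤ B := by
  refine csSup_le ⟨min (f x) (g x), x, hx, x, hx, min_self x, rfl⟩ ?_
  rintro v ⟨y, hy, z, hz, hm, rfl⟩
  exact hB y hy z hz hm

lemma aux_inter_mem {f g : ℝ → ℝ} (hf : MapsI f) (hg : MapsI g) {x : ℝ}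
    (hx : x ∈ Set.Icc (0:ℝ) 1) : inter f g x ∈ Set.Icc (0:ℝ) 1 :=
  ⟨le_trans (le_min (hf x hx).1 (hg x hx).1) (aux_le_inter hf hx hx (min_self x)),
   aux_inter_le hx (fun y hy _ _ _ => le_trans (min_le_left _ _) (hf y hy).2)⟩

lemma aux_union_mem {f g : ℝ → ℝ} (hf : MapsI f) (hg : MapsI g) {x : ℝ}
    (hx : x ∈ Set.Icc (0:ℝ) 1) : union f g x ∈ Set.Icc (0:ℝ) 1 :=
  ⟨le_trans (le_min (hf x hx).1 (hg x hx).1) (aux_le_union hf hx hx (max_self x)),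
   aux_union_le hx (fun y hy _ _ _ => le_trans (min_le_left _ _) (hf y hy).2)⟩

lemma aux_mapsI_star {f g : ℝ → ℝ} (hf : MapsI f) (hg : MapsI g) : MapsI (_root_.star f g) := by
  unfold _root_.star
  split_ifs with h1 h2 h3
  · exact hg
  · exact hf
  · exact fun x hx => aux_inter_mem hf hg hx
  · intro x hx
    by_cases hx1 : x = 1
    · show (if x = 1 then 0 else inter f g x) ∈ Set.Icc (0:ℝ) 1
      rw [if_pos hx1]
      exact ⟨le_refl 0, zero_le_one⟩
    · show (if x = 1 then 0 else inter f g x) ∈ Set.Icc (0:ℝ) 1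
      rw [if_neg hx1]
      exact aux_inter_mem hf hg hx

lemma aux_star_apply_ne_one {f g : ℝ → ℝ} (hf' : ¬ Set.EqOn f ind1 (Set.Icc (0:ℝ) 1))
    (hg' : ¬ Set.EqOn g ind1 (Set.Icc (0:ℝ) 1)) {x : ℝ} (hx : x ≠ 1) :
    _root_.star f g x = inter f g x := by
  unfold _root_.star
  rw [if_neg hf', if_neg hg']
  split_ifs with h
  · rfl
  · show (if x = 1 then 0 else inter f g x) = inter f g x
    exact if_neg hx

lemma aux_star_one_eq {f g : ℝ → ℝ} (hf' : ¬ Set.EqOn f ind1 (Set.Icc (0:ℝ) 1))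
    (hg' : ¬ Set.EqOn g ind1 (Set.Icc (0:ℝ) 1)) (h : min (f 1) (g 1) = 1) :
    _root_.star f g 1 = inter f g 1 := by
  unfold _root_.star
  rw [if_neg hf', if_neg hg', if_pos h]

lemma aux_star_one_lt {f g : ℝ → ℝ} (hf' : ¬ Set.EqOn f ind1 (Set.Icc (0:ℝ) 1))
    (hg' : ¬ Set.EqOn g ind1 (Set.Icc (0:ℝ) 1)) (h : ¬ min (f 1) (g 1) = 1) :
    _root_.star f g 1 = 0 := by
  unfold _root_.star
  rw [if_neg hf', if_neg hg', if_neg h]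
  show (if (1:ℝ) = 1 then (0:ℝ) else inter f g 1) = 0
  rw [if_pos rfl]

lemma aux_inter_one (f g : ℝ → ℝ) : inter f g 1 = min (f 1) (g 1) := by
  unfold inter
  have hset : {v | ∃ y ∈ Set.Icc (0:ℝ) 1, ∃ z ∈ Set.Icc (0:ℝ) 1, min y z = 1 ∧ v = min (f y) (g z)}
      = {min (f 1) (g 1)} := by
    ext v
    constructor
    · rintro ⟨y, hy, z, hz, hm, rfl⟩
      have hy1 : y = 1 := le_antisymm hy.2 (hm ▸ min_le_left y z)
      have hz1 : z = 1 := le_antisymm hz.2 (hm ▸ min_le_right y z)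
      rw [hy1, hz1]; rfl
    · rintro rfl
      exact ⟨1, ⟨zero_le_one, le_refl 1⟩, 1, ⟨zero_le_one, le_refl 1⟩, min_self 1, rfl⟩
  rw [hset, csSup_singleton]

lemma aux_le_of_min_normal {h : ℝ → ℝ} (hhn : NormalFn h) {a B : ℝ} (ha : a ≤ 1)
    (hB : ∀ z, 0 ≤ z → z ≤ 1 → min a (h z) ≤ B) : a ≤ B := by
  have h2 : min a (sSup (h '' Set.Icc 0 1)) ≤ B := by
    refine aux_min_sSup_le ⟨h 0, Set.mem_image_of_mem h ⟨le_refl (0:ℝ), zero_le_one⟩⟩ ?_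
    rintro s ⟨z, hz, rfl⟩
    exact hB z hz.1 hz.2
  rwa [hhn, min_eq_left ha] at h2

lemma aux_normal_max {g : ℝ → ℝ} (hgn : NormalFn g) {B : ℝ}
    (hB : ∀ b, 0 ≤ b → b < 1 → g b ≤ B) : 1 ≤ max B (g 1) := by
  have h2 : sSup (g '' Set.Icc 0 1) ≤ max B (g 1) := by
    refine csSup_le ⟨g 0, Set.mem_image_of_mem g ⟨le_refl (0:ℝ), zero_le_one⟩⟩ ?_
    rintro v ⟨c, hc, rfl⟩
    rcases lt_or_eq_of_le hc.2 with hlt | heq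
    · exact le_max_of_le_left (hB c hc.1 hlt)
    · rw [heq]; exact le_max_right _ _
  rwa [hgn] at h2

lemma aux_one_le_of_Ico {g : ℝ → ℝ} (hgn : NormalFn g) (h1 : g 1 < 1) {B : ℝ}
    (hB : ∀ b, 0 ≤ b → b < 1 → g b ≤ B) : 1 ≤ B := by
  rcases le_max_iff.mp (aux_normal_max hgn hB) with h | h
  · exact h
  · linarith

lemma aux_le_of_min_Ico {h : ℝ → ℝ} (hh : MapsI h) (hhn : NormalFn h) (h1 : h 1 < 1)
    {a B : ℝ} (ha : a ≤ 1) (hB : ∀ z, 0 ≤ z → z < 1 → min a (h z) ≤ B) : a ≤ B := by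
  have hbdd : BddAbove (h '' Set.Ico (0:ℝ) 1) := by
    refine ⟨1, ?_⟩
    rintro v ⟨c, hc, rfl⟩
    exact (hh c ⟨hc.1, le_of_lt hc.2⟩).2
  have hsup : sSup (h '' Set.Ico (0:ℝ) 1) = 1 := by
    apply le_antisymm
    · refine csSup_le ⟨h 0, Set.mem_image_of_mem h ⟨le_refl (0:ℝ), zero_lt_one⟩⟩ ?_
      rintro v ⟨c, hc, rfl⟩
      exact (hh c ⟨hc.1, le_of_lt hc.2⟩).2
    · exact aux_one_le_of_Ico hhn h1
        (fun b h0 hb1 => le_csSup hbdd (Set.mem_image_of_mem h ⟨h0, hb1⟩))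
  have h2 : min a (sSup (h '' Set.Ico (0:ℝ) 1)) ≤ B := by
    refine aux_min_sSup_le ⟨h 0, Set.mem_image_of_mem h ⟨le_refl (0:ℝ), zero_lt_one⟩⟩ ?_
    rintro s ⟨z, hz, rfl⟩
    exact hB z hz.1 hz.2
  rwa [hsup, min_eq_left ha] at h2

lemma aux_exists_pos {g : ℝ → ℝ} (hg : MapsI g) (hgn : NormalFn g)
    (h' : ¬ Set.EqOn g ind1 (Set.Icc (0:ℝ) 1)) : ∃ b, 0 ≤ b ∧ b < 1 ∧ 0 < g b := by
  by_contra hc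
  push_neg at hc
  apply h'
  intro x hx
  rcases lt_or_eq_of_le hx.2 with hlt | heq
  · have h1 := hc x hx.1 hlt
    have h0 := (hg x hx).1
    have hgx : g x = 0 := le_antisymm h1 h0
    show g x = ind1 x
    rw [hgx]
    unfold ind1
    rw [if_neg (ne_of_lt hlt)]
  · have h11 : (1:ℝ) ≤ max 0 (g 1) := aux_normal_max hgn hc
    have hg1 : g 1 = 1 := by
      rcases le_max_iff.mp h11 with hcon | hle
      · linarith
      · exact le_antisymm (hg 1 ⟨zero_le_one, le_refl 1⟩).2 hle
    show g x = ind1 x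
    rw [heq, hg1]
    unfold ind1
    rw [if_pos rfl]

lemma aux_union_one {g h : ℝ → ℝ} (hg : MapsI g) (hh : MapsI h)
    (hgn : NormalFn g) (hhn : NormalFn h) : union g h 1 = max (g 1) (h 1) := by
  have h1mem : (1:ℝ) ∈ Set.Icc (0:ℝ) 1 := ⟨zero_le_one, le_refl 1⟩
  apply le_antisymm
  · apply aux_union_le h1mem
    intro y hy z hz hm
    rcases max_choice y z with hc | hc
    · have hy1 : y = 1 := by rw [hc] at hm; exact hm
      rw [hy1]
      exact le_trans (min_le_left _ _) (le_max_left _ _)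
    · have hz1 : z = 1 := by rw [hc] at hm; exact hm
      rw [hz1]
      exact le_trans (min_le_right _ _) (le_max_right _ _)
  · apply max_le
    · apply aux_le_of_min_normal hhn (hg 1 h1mem).2
      intro z h0 h1
      exact aux_le_union hg h1mem ⟨h0, h1⟩ (max_eq_left h1)
    · apply aux_le_of_min_normal hgn (hh 1 h1mem).2
      intro y h0 h1
      rw [min_comm]
      exact aux_le_union hg ⟨h0, h1⟩ h1mem (max_eq_right h1)

lemma aux_union_comm (f g : ℝ → ℝ) (x : ℝ) : union f g x = union g f x := by
  unfold union
  congr 1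
  ext v
  constructor
  · rintro ⟨y, hy, z, hz, hm, rfl⟩
    exact ⟨z, hz, y, hy, by rw [max_comm]; exact hm, by rw [min_comm]⟩
  · rintro ⟨y, hy, z, hz, hm, rfl⟩
    exact ⟨z, hz, y, hy, by rw [max_comm]; exact hm, by rw [min_comm]⟩
/-- Triple convolution helper. -/
def tri (f g h : ℝ → ℝ) (x : ℝ) : ℝ :=
  sSup {v | ∃ y ∈ Set.Icc (0:ℝ) 1, ∃ z ∈ Set.Icc (0:ℝ) 1, ∃ w ∈ Set.Icc (0:ℝ) 1,
    min y (max z w) = x ∧ v = min (f y) (min (g z) (h w))}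

lemma aux_tri_bdd (f g h : ℝ → ℝ) (hf : MapsI f) (x : ℝ) :
    BddAbove {v | ∃ y ∈ Set.Icc (0:ℝ) 1, ∃ z ∈ Set.Icc (0:ℝ) 1, ∃ w ∈ Set.Icc (0:ℝ) 1,
      min y (max z w) = x ∧ v = min (f y) (min (g z) (h w))} := by
  refine ⟨1, ?_⟩
  rintro v ⟨y, hy, z, hz, w, hw, -, rfl⟩
  exact le_trans (min_le_left _ _) (hf y hy).2

lemma aux_le_tri {f g h : ℝ → ℝ} (hf : MapsI f) {x y z w : ℝ} (hy : y ∈ Set.Icc (0:ℝ) 1)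
    (hz : z ∈ Set.Icc (0:ℝ) 1) (hw : w ∈ Set.Icc (0:ℝ) 1) (hm : min y (max z w) = x) :
    min (f y) (min (g z) (h w)) ≤ tri f g h x :=
  le_csSup (aux_tri_bdd f g h hf x) ⟨y, hy, z, hz, w, hw, hm, rfl⟩

lemma aux_tri_le {f g h : ℝ → ℝ} {x B : ℝ} (hx : x ∈ Set.Icc (0:ℝ) 1)
    (hB : ∀ y ∈ Set.Icc (0:ℝ) 1, ∀ z ∈ Set.Icc (0:ℝ) 1, ∀ w ∈ Set.Icc (0:ℝ) 1,
      min y (max z w) = x → min (f y) (min (g z) (h w)) ≤ B) :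
    tri f g h x ≤ B := by
  refine csSup_le ⟨min (f x) (min (g x) (h x)), x, hx, x, hx, x, hx, by rw [max_self, min_self], rfl⟩ ?_
  rintro v ⟨y, hy, z, hz, w, hw, hm, rfl⟩
  exact hB y hy z hz w hw hm

lemma aux_key {f : ℝ → ℝ} (hfc : ConvexFn f) {y y' z w x : ℝ}
    (hy : y ∈ Set.Icc (0:ℝ) 1) (hy' : y' ∈ Set.Icc (0:ℝ) 1) (hz : z ∈ Set.Icc (0:ℝ) 1)
    (hw : w ∈ Set.Icc (0:ℝ) 1) (hx : max (min y z) (min y' w) = x) :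
    ∃ Y, Y ∈ Set.Icc (0:ℝ) 1 ∧ min Y (max z w) = x ∧ min (f y) (f y') ≤ f Y := by
  have hx0 : 0 ≤ x := hx ▸ le_trans (le_min hy.1 hz.1) (le_max_left _ _)
  have hxzw : x ≤ max z w := hx ▸ max_le_max (min_le_right y z) (min_le_right y' w)
  have hxy : x ≤ max y y' := hx ▸ max_le_max (min_le_left y z) (min_le_left y' w)
  rcases eq_or_lt_of_le hxzw with heq | hlt
  · refine ⟨max y y', ⟨le_trans hy.1 (le_max_left _ _), max_le hy.2 hy'.2⟩, ?_, ?_⟩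
    · rw [← heq]
      exact min_eq_right hxy
    · rcases max_choice y y' with hc | hc <;> rw [hc]
      · exact min_le_left _ _
      · exact min_le_right _ _
  · refine ⟨x, ⟨hx0, le_trans hxy (max_le hy.2 hy'.2)⟩, min_eq_left (le_of_lt hlt), ?_⟩
    have hminyy' : min y y' ≤ x := by
      by_contra hcon
      push_neg at hcon
      have hyx : x < y := lt_of_lt_of_le hcon (min_le_left _ _)
      have hy'x : x < y' := lt_of_lt_of_le hcon (min_le_right _ _)
      have hzx : z ≤ x := by
        have h1 : min y z ≤ x := hx ▸ le_max_left _ _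
        rcases min_choice y z with hc | hc
        · rw [hc] at h1; linarith
        · rwa [hc] at h1
      have hwx : w ≤ x := by
        have h1 : min y' w ≤ x := hx ▸ le_max_right _ _
        rcases min_choice y' w with hc | hc
        · rw [hc] at h1; linarith
        · rwa [hc] at h1
      exact absurd hlt (not_lt.mpr (max_le hzx hwx))
    have hconv := hfc (min y y') x (max y y') (le_min hy.1 hy'.1) hminyy' hxy
      (max_le hy.2 hy'.2)
    rcases le_total y y' with hyy | hyy
    · rwa [min_eq_left hyy, max_eq_right hyy] at hconv
    · rw [min_eq_right hyy, max_eq_left hyy] at hconv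
      rwa [min_comm]

lemma aux_inter_union_eq_tri {f g h : ℝ → ℝ} (hf : MapsI f) (hg : MapsI g)
    {x : ℝ} (hx : x ∈ Set.Icc (0:ℝ) 1) : inter f (union g h) x = tri f g h x := by
  apply le_antisymm
  · apply aux_inter_le hx
    intro y hy u hu hm
    show min (f y) (union g h u) ≤ tri f g h x
    unfold union
    refine aux_min_sSup_le ⟨min (g u) (h u), u, hu, u, hu, max_self u, rfl⟩ ?_
    rintro s ⟨z, hz, w, hw, hmax, rfl⟩
    exact aux_le_tri hf hy hz hw (by rw [hmax, hm])
  · apply aux_tri_le hx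
    intro y hy z hz w hw hm
    have hu : max z w ∈ Set.Icc (0:ℝ) 1 := ⟨le_trans hz.1 (le_max_left _ _), max_le hz.2 hw.2⟩
    have h1 : min (g z) (h w) ≤ union g h (max z w) := aux_le_union hg hz hw rfl
    exact le_trans (min_le_min (le_refl (f y)) h1) (aux_le_inter hf hy hu hm)

lemma aux_union_inter_eq_tri {f g h : ℝ → ℝ} (hf : MapsI f) (hg : MapsI g) (hh : MapsI h)
    (hfc : ConvexFn f) {x : ℝ} (hx : x ∈ Set.Icc (0:ℝ) 1) :
    union (inter f g) (inter f h) x = tri f g h x := by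
  apply le_antisymm
  · apply aux_union_le hx
    intro p hp q hq hm
    show min (inter f g p) (inter f h q) ≤ tri f g h x
    unfold inter
    refine aux_min_sSup_sSup_le ⟨min (f p) (g p), p, hp, p, hp, min_self p, rfl⟩
      ⟨min (f q) (h q), q, hq, q, hq, min_self q, rfl⟩ ?_
    rintro a ⟨y, hy, z, hz, hmy, rfl⟩ b ⟨y', hy', w, hw, hmy', rfl⟩
    obtain ⟨Y, hY, hYm, hYf⟩ := aux_key hfc hy hy' hz hw (by rw [hmy, hmy', hm])
    refine le_trans ?_ (aux_le_tri hf hY hz hw hYm)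
    refine le_min (le_trans ?_ hYf) (le_min ?_ ?_)
    · exact le_min (le_trans (min_le_left _ _) (min_le_left _ _))
        (le_trans (min_le_right _ _) (min_le_left _ _))
    · exact le_trans (min_le_left _ _) (min_le_right _ _)
    · exact le_trans (min_le_right _ _) (min_le_right _ _)
  · apply aux_tri_le hx
    intro y hy z hz w hw hm
    have hp : min y z ∈ Set.Icc (0:ℝ) 1 := ⟨le_min hy.1 hz.1, le_trans (min_le_left _ _) hy.2⟩
    have hq : min y w ∈ Set.Icc (0:ℝ) 1 := ⟨le_min hy.1 hw.1, le_trans (min_le_left _ _) hy.2⟩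
    have hmax : max (min y z) (min y w) = x := by
      rw [← min_max_distrib_left]; exact hm
    have e1 : min (f y) (min (g z) (h w)) ≤ inter f g (min y z) :=
      le_trans (le_min (min_le_left _ _) (le_trans (min_le_right _ _) (min_le_left _ _)))
        (aux_le_inter hf hy hz rfl)
    have e2 : min (f y) (min (g z) (h w)) ≤ inter f h (min y w) :=
      le_trans (le_min (min_le_left _ _) (le_trans (min_le_right _ _) (min_le_right _ _)))
        (aux_le_inter hf hy hw rfl)
    exact le_trans (le_min e1 e2) (aux_le_union (fun p hp' => aux_inter_mem hf hg hp') hp hq hmax)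

lemma aux_union_congr_Ico {S S' T T' : ℝ → ℝ} (hS : ∀ z, 0 ≤ z → z < 1 → S z = S' z)
    (hT : ∀ z, 0 ≤ z → z < 1 → T z = T' z) {x : ℝ} (hx1 : x < 1) :
    union S T x = union S' T' x := by
  unfold union
  congr 1
  ext v
  constructor
  · rintro ⟨y, hy, z, hz, hm, rfl⟩
    refine ⟨y, hy, z, hz, hm, ?_⟩
    rw [hS y hy.1 (lt_of_le_of_lt (hm ▸ le_max_left y z) hx1),
      hT z hz.1 (lt_of_le_of_lt (hm ▸ le_max_right y z) hx1)]
  · rintro ⟨y, hy, z, hz, hm, rfl⟩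
    refine ⟨y, hy, z, hz, hm, ?_⟩
    rw [hS y hy.1 (lt_of_le_of_lt (hm ▸ le_max_left y z) hx1),
      hT z hz.1 (lt_of_le_of_lt (hm ▸ le_max_right y z) hx1)]
lemma aux_absorb {f k : ℝ → ℝ}
    (hup : ∀ x ∈ Set.Icc (0:ℝ) 1, ∀ y, 0 ≤ y → y ≤ x → min (f y) (k x) ≤ f x)
    (hlow : ∀ x ∈ Set.Icc (0:ℝ) 1, f x ≤ union f k x) :
    Set.EqOn (union f k) f (Set.Icc (0:ℝ) 1) := by
  intro x hx
  apply le_antisymm _ (hlow x hx)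
  apply aux_union_le hx
  intro y hy z hz hm
  rcases max_choice y z with hc | hc
  · rw [hc] at hm
    rw [hm]
    exact min_le_left _ _
  · rw [hc] at hm
    subst hm
    exact hup z hz y hy.1 (le_trans (le_max_left y z) (le_of_eq hc))

lemma aux_union_self {f : ℝ → ℝ} (hf : MapsI f) :
    Set.EqOn (union f f) f (Set.Icc (0:ℝ) 1) := by
  apply aux_absorb
  · intro x _ y _ _
    exact min_le_right _ _
  · intro x hx
    have := aux_le_union (g := f) hf hx hx (max_self x)
    rwa [min_self] at this

lemma aux_star_upper {f h : ℝ → ℝ} (hf : MapsI f) (hfc : ConvexFn f)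
    (hf' : ¬ Set.EqOn f ind1 (Set.Icc (0:ℝ) 1)) (hh' : ¬ Set.EqOn h ind1 (Set.Icc (0:ℝ) 1)) :
    ∀ x ∈ Set.Icc (0:ℝ) 1, ∀ y, 0 ≤ y → y ≤ x → min (f y) (_root_.star f h x) ≤ f x := by
  intro x hx y h0 hyx
  by_cases hx1 : x = 1
  · subst hx1
    by_cases hmod : min (f 1) (h 1) = 1
    · have hf1 : f 1 = 1 := le_antisymm (hf 1 hx).2 (le_trans (le_of_eq hmod.symm) (min_le_left _ _))
      rw [hf1]
      exact le_trans (min_le_left _ _) (hf y ⟨h0, hyx⟩).2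
    · rw [aux_star_one_lt hf' hh' hmod]
      exact le_trans (min_le_right _ _) (hf 1 hx).1
  · rw [aux_star_apply_ne_one hf' hh' hx1]
    by_cases hfy : f y ≤ f x
    · exact le_trans (min_le_left _ _) hfy
    · refine le_trans (min_le_right _ _) (aux_inter_le hx ?_)
      intro Y hY Z hZ hm
      rcases min_choice Y Z with hc | hc
      · rw [hc] at hm
        rw [hm]
        exact min_le_left _ _
      · rw [hc] at hm
        subst hm
        have hxY : Z ≤ Y := min_eq_right_iff.mp hc
        have hconv := hfc y Z Y h0 hyx hxY hY.2
        rcases min_choice (f y) (f Y) with hc2 | hc2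
        · rw [hc2] at hconv
          exact absurd hconv hfy
        · rw [hc2] at hconv
          exact le_trans (min_le_left _ _) hconv

lemma aux_star_lower {f h : ℝ → ℝ} (hf : MapsI f) (hh : MapsI h)
    (hfn : NormalFn f) (hhn : NormalFn h)
    (hf' : ¬ Set.EqOn f ind1 (Set.Icc (0:ℝ) 1)) (hh' : ¬ Set.EqOn h ind1 (Set.Icc (0:ℝ) 1)) :
    ∀ x ∈ Set.Icc (0:ℝ) 1, f x ≤ union f (_root_.star f h) x := by
  intro x hx
  have h1mem : (1:ℝ) ∈ Set.Icc (0:ℝ) 1 := ⟨zero_le_one, le_refl 1⟩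
  apply aux_le_of_min_normal hhn (hf x hx).2
  intro Z h0Z hZ1
  by_cases hzx : min x Z < 1
  · have hzmem : min x Z ∈ Set.Icc (0:ℝ) 1 := ⟨le_min hx.1 h0Z, le_of_lt hzx⟩
    have h1 : min (f x) (h Z) ≤ inter f h (min x Z) := aux_le_inter hf hx ⟨h0Z, hZ1⟩ rfl
    have h2 : _root_.star f h (min x Z) = inter f h (min x Z) :=
      aux_star_apply_ne_one hf' hh' (ne_of_lt hzx)
    have h3 : min (f x) (h Z) ≤ min (f x) (_root_.star f h (min x Z)) :=
      le_min (min_le_left _ _) (by rw [h2]; exact h1)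
    exact le_trans h3 (aux_le_union hf hx hzmem (max_eq_left (min_le_left x Z)))
  · have hxZ1 : x = 1 ∧ Z = 1 := by
      push_neg at hzx
      constructor
      · exact le_antisymm hx.2 (le_trans hzx (min_le_left x Z))
      · exact le_antisymm hZ1 (le_trans hzx (min_le_right x Z))
    obtain ⟨hx1, hZeq⟩ := hxZ1
    subst hx1
    subst hZeq
    by_cases hmod : min (f 1) (h 1) = 1
    · have hk : min (f 1) (h 1) ≤ _root_.star f h 1 := by
        rw [aux_star_one_eq hf' hh' hmod, aux_inter_one]
      exact le_trans (le_min (min_le_left _ _) hk)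
        (aux_le_union hf h1mem h1mem (max_self 1))
    · by_cases hh1 : h 1 < 1
      · apply aux_le_of_min_Ico hh hhn hh1 (le_trans (min_le_right _ _) (hh 1 h1mem).2)
        intro Z' h0' h1'
        have hZmem : Z' ∈ Set.Icc (0:ℝ) 1 := ⟨h0', le_of_lt h1'⟩
        have hk : min (f 1) (h Z') ≤ _root_.star f h Z' := by
          rw [aux_star_apply_ne_one hf' hh' (ne_of_lt h1')]
          exact aux_le_inter hf h1mem hZmem (min_eq_right (le_of_lt h1'))
        have step : min (min (f 1) (h 1)) (h Z') ≤ min (f 1) (_root_.star f h Z') :=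
          le_min (le_trans (min_le_left _ _) (min_le_left _ _)) (le_trans
            (le_min (le_trans (min_le_left _ _) (min_le_left _ _)) (min_le_right _ _)) hk)
        exact le_trans step (aux_le_union hf h1mem hZmem (max_eq_left (le_of_lt h1')))
      · have hh1' : h 1 = 1 := le_antisymm (hh 1 h1mem).2 (not_lt.mp hh1)
        have hf1 : f 1 < 1 := by
          rcases lt_or_eq_of_le (hf 1 h1mem).2 with hlt | heq
          · exact hlt
          · exact absurd (by rw [heq, hh1', min_self]) hmod
        apply aux_le_of_min_Ico hf hfn hf1 (le_trans (min_le_left _ _) (hf 1 h1mem).2)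
        intro Y h0' h1'
        have hYmem : Y ∈ Set.Icc (0:ℝ) 1 := ⟨h0', le_of_lt h1'⟩
        have hk : min (f Y) (h 1) ≤ _root_.star f h Y := by
          rw [aux_star_apply_ne_one hf' hh' (ne_of_lt h1')]
          exact aux_le_inter hf hYmem h1mem (min_eq_left (le_of_lt h1'))
        have step : min (min (f 1) (h 1)) (f Y) ≤ min (f 1) (_root_.star f h Y) :=
          le_min (le_trans (min_le_left _ _) (min_le_left _ _)) (le_trans
            (le_min (min_le_right _ _) (le_trans (min_le_left _ _) (min_le_right _ _))) hk)
        exact le_trans step (aux_le_union hf h1mem hYmem (max_eq_left (le_of_lt h1')))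

lemma aux_union_star_absorb {f h : ℝ → ℝ} (hf : MapsI f) (hh : MapsI h)
    (hfn : NormalFn f) (hhn : NormalFn h) (hfc : ConvexFn f)
    (hf' : ¬ Set.EqOn f ind1 (Set.Icc (0:ℝ) 1)) (hh' : ¬ Set.EqOn h ind1 (Set.Icc (0:ℝ) 1)) :
    Set.EqOn (union f (_root_.star f h)) f (Set.Icc (0:ℝ) 1) :=
  aux_absorb (aux_star_upper hf hfc hf' hh') (aux_star_lower hf hh hfn hhn hf' hh')

lemma aux_union_ind1_left {g h : ℝ → ℝ} (hg1 : Set.EqOn g ind1 (Set.Icc (0:ℝ) 1))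
    (hh : MapsI h) (hhn : NormalFn h) :
    Set.EqOn (union g h) ind1 (Set.Icc (0:ℝ) 1) := by
  have hgm : MapsI g := by
    intro x hx
    rw [hg1 hx]
    unfold ind1
    by_cases hx1 : x = 1
    · rw [if_pos hx1]; exact ⟨zero_le_one, le_refl 1⟩
    · rw [if_neg hx1]; exact ⟨le_refl 0, zero_le_one⟩
  intro x hx
  have h1mem : (1:ℝ) ∈ Set.Icc (0:ℝ) 1 := ⟨zero_le_one, le_refl 1⟩
  rcases lt_or_eq_of_le hx.2 with hxl | hxe
  · have hind : ind1 x = 0 := if_neg (ne_of_lt hxl)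
    rw [hind]
    apply le_antisymm
    · apply aux_union_le hx
      intro y hy z hz hm
      have hy1 : y < 1 := lt_of_le_of_lt (le_trans (le_max_left y z) (le_of_eq hm)) hxl
      have hgy : g y = 0 := by
        rw [hg1 ⟨hy.1, le_of_lt hy1⟩]
        exact if_neg (ne_of_lt hy1)
      rw [hgy]
      exact min_le_left _ _
    · have h0 : (0:ℝ) ≤ min (g x) (h x) := le_min (hgm x hx).1 (hh x hx).1
      exact le_trans h0 (aux_le_union hgm hx hx (max_self x))
  · subst hxe
    have hind : ind1 (1:ℝ) = 1 := if_pos rfl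
    rw [hind]
    have hg11 : g 1 = 1 := by
      have := hg1 h1mem
      rw [this]
      exact if_pos rfl
    apply le_antisymm
    · apply aux_union_le h1mem
      intro y hy z hz _
      exact le_trans (min_le_right _ _) (hh z hz).2
    · apply aux_le_of_min_normal hhn le_rfl
      intro z h0 h1
      have : min (g 1) (h z) ≤ union g h 1 := aux_le_union hgm h1mem ⟨h0, h1⟩ (max_eq_left h1)
      rw [hg11] at this
      exact this

lemma aux_caseA_one {f g h : ℝ → ℝ} (hf : MapsI f) (hg : MapsI g) (hh : MapsI h)
    (hhn : NormalFn h)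
    (hf' : ¬ Set.EqOn f ind1 (Set.Icc (0:ℝ) 1)) (hg' : ¬ Set.EqOn g ind1 (Set.Icc (0:ℝ) 1))
    (hh' : ¬ Set.EqOn h ind1 (Set.Icc (0:ℝ) 1)) (hf1 : f 1 = 1) (hg1 : g 1 = 1) :
    union (_root_.star f g) (_root_.star f h) 1 = 1 := by
  have h1mem : (1:ℝ) ∈ Set.Icc (0:ℝ) 1 := ⟨zero_le_one, le_refl 1⟩
  have hsfg1 : _root_.star f g 1 = 1 := by
    rw [aux_star_one_eq hf' hg' (by rw [hf1, hg1, min_self]), aux_inter_one, hf1, hg1, min_self]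
  apply le_antisymm
  · apply aux_union_le h1mem
    intro y hy z hz _
    exact le_trans (min_le_left _ _) ((aux_mapsI_star hf hg) y hy).2
  · by_cases hh1 : h 1 = 1
    · have hsfh1 : _root_.star f h 1 = 1 := by
        rw [aux_star_one_eq hf' hh' (by rw [hf1, hh1, min_self]), aux_inter_one, hf1, hh1, min_self]
      have := aux_le_union (aux_mapsI_star hf hg) h1mem h1mem (max_self 1)
        (f := _root_.star f g) (g := _root_.star f h)
      rw [hsfg1, hsfh1, min_self] at this
      exact this
    · apply aux_one_le_of_Ico hhn (lt_of_le_of_ne (hh 1 h1mem).2 hh1)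
      intro Z h0 h1'
      have hZmem : Z ∈ Set.Icc (0:ℝ) 1 := ⟨h0, le_of_lt h1'⟩
      have e1 : min (f 1) (h Z) ≤ _root_.star f h Z := by
        rw [aux_star_apply_ne_one hf' hh' (ne_of_lt h1')]
        exact aux_le_inter hf h1mem hZmem (min_eq_right (le_of_lt h1'))
      have e2 : h Z ≤ min (_root_.star f g 1) (_root_.star f h Z) := by
        refine le_min (by rw [hsfg1]; exact (hh Z hZmem).2) (le_trans ?_ e1)
        rw [hf1]
        exact le_min (hh Z hZmem).2 le_rfl
      exact le_trans e2 (aux_le_union (aux_mapsI_star hf hg) h1mem hZmem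
        (max_eq_left (le_of_lt h1')))
/-- `⋆` distributes over the convolution union `⊔`. -/
theorem stmt_18 (f g h : ℝ → ℝ) (hf : MapsI f) (hg : MapsI g) (hh : MapsI h)
    (hfn : NormalFn f) (hfc : ConvexFn f) (hgn : NormalFn g) (hgc : ConvexFn g)
    (hhn : NormalFn h) (hhc : ConvexFn h) :
    Set.EqOn (star f (union g h)) (union (star f g) (star f h)) (Set.Icc (0:ℝ) 1) := by
  have h1mem : (1:ℝ) ∈ Set.Icc (0:ℝ) 1 := ⟨zero_le_one, le_refl 1⟩
  by_cases hf' : Set.EqOn f ind1 (Set.Icc (0:ℝ) 1)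
  · have e1 : _root_.star f (union g h) = union g h := by
      unfold _root_.star; rw [if_pos hf']
    have e2 : _root_.star f g = g := by unfold _root_.star; rw [if_pos hf']
    have e3 : _root_.star f h = h := by unfold _root_.star; rw [if_pos hf']
    rw [e1, e2, e3]
    exact fun x _ => rfl
  · by_cases hg' : Set.EqOn g ind1 (Set.Icc (0:ℝ) 1)
    · have hU : Set.EqOn (union g h) ind1 (Set.Icc (0:ℝ) 1) := aux_union_ind1_left hg' hh hhn
      have e1 : _root_.star f (union g h) = f := by
        unfold _root_.star; rw [if_neg hf', if_pos hU]
      have e2 : _root_.star f g = f := by unfold _root_.star; rw [if_neg hf', if_pos hg']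
      rw [e1, e2]
      by_cases hh' : Set.EqOn h ind1 (Set.Icc (0:ℝ) 1)
      · have e3 : _root_.star f h = f := by unfold _root_.star; rw [if_neg hf', if_pos hh']
        rw [e3]
        intro x hx
        exact (aux_union_self hf hx).symm
      · intro x hx
        exact (aux_union_star_absorb hf hh hfn hhn hfc hf' hh' hx).symm
    · by_cases hh' : Set.EqOn h ind1 (Set.Icc (0:ℝ) 1)
      · have hU : Set.EqOn (union g h) ind1 (Set.Icc (0:ℝ) 1) := by
          intro x hx
          rw [aux_union_comm g h x]
          exact aux_union_ind1_left hh' hg hgn hx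
        have e1 : _root_.star f (union g h) = f := by
          unfold _root_.star; rw [if_neg hf', if_pos hU]
        have e3 : _root_.star f h = f := by unfold _root_.star; rw [if_neg hf', if_pos hh']
        rw [e1, e3]
        intro x hx
        rw [aux_union_comm]
        exact (aux_union_star_absorb hf hg hfn hgn hfc hf' hg' hx).symm
      · -- main case: none of f, g, h is ind1
        obtain ⟨b, hb0, hb1, hgb⟩ := aux_exists_pos hg hgn hg'
        obtain ⟨c, hc0, hc1, hhc'⟩ := aux_exists_pos hh hhn hh'
        have hU' : ¬ Set.EqOn (union g h) ind1 (Set.Icc (0:ℝ) 1) := by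
          intro hU
          have hm : max b c < 1 := max_lt hb1 hc1
          have hmem : max b c ∈ Set.Icc (0:ℝ) 1 :=
            ⟨le_trans hb0 (le_max_left _ _), le_of_lt hm⟩
          have h1 : min (g b) (h c) ≤ union g h (max b c) :=
            aux_le_union hg ⟨hb0, le_of_lt hb1⟩ ⟨hc0, le_of_lt hc1⟩ rfl
          rw [hU hmem] at h1
          have hz : ind1 (max b c) = 0 := if_neg (ne_of_lt hm)
          rw [hz] at h1
          exact absurd h1 (not_le.mpr (lt_min hgb hhc'))
        have hU1 : union g h 1 = max (g 1) (h 1) := aux_union_one hg hh hgn hhn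
        intro x hx
        rcases lt_or_eq_of_le hx.2 with hxl | hxe
        · -- x < 1
          have L : _root_.star f (union g h) x = inter f (union g h) x :=
            aux_star_apply_ne_one hf' hU' (ne_of_lt hxl)
          rw [L, aux_inter_union_eq_tri hf hg hx,
            ← aux_union_inter_eq_tri hf hg hh hfc hx]
          exact aux_union_congr_Ico
            (fun z h0 h1 => (aux_star_apply_ne_one hf' hg' (ne_of_lt h1)).symm)
            (fun z h0 h1 => (aux_star_apply_ne_one hf' hh' (ne_of_lt h1)).symm) hxl
        · subst hxe
          by_cases hA : min (f 1) (union g h 1) = 1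
          · have L : _root_.star f (union g h) 1 = 1 := by
              rw [aux_star_one_eq hf' hU' hA, aux_inter_one, hA]
            rw [L]
            have hf1 : f 1 = 1 :=
              le_antisymm (hf 1 h1mem).2 (le_trans (le_of_eq hA.symm) (min_le_left _ _))
            have hU11 : (1:ℝ) ≤ union g h 1 :=
              le_trans (le_of_eq hA.symm) (min_le_right _ _)
            have hUle : union g h 1 ≤ 1 :=
              le_trans (le_of_eq hU1) (max_le (hg 1 h1mem).2 (hh 1 h1mem).2)
            have hmax : max (g 1) (h 1) = 1 := by
              rw [← hU1]
              exact le_antisymm hUle hU11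
            rcases max_choice (g 1) (h 1) with hc | hc
            · rw [hc] at hmax
              exact (aux_caseA_one hf hg hh hhn hf' hg' hh' hf1 hmax).symm
            · rw [hc] at hmax
              rw [aux_union_comm]
              exact (aux_caseA_one hf hh hg hgn hf' hh' hg' hf1 hmax).symm
          · have L : _root_.star f (union g h) 1 = 0 := aux_star_one_lt hf' hU' hA
            rw [L]
            have hmodg : ¬ min (f 1) (g 1) = 1 := by
              intro hcg
              apply hA
              have hfg1 : f 1 = 1 :=
                le_antisymm (hf 1 h1mem).2 (le_trans (le_of_eq hcg.symm) (min_le_left _ _))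
              have hg11 : g 1 = 1 :=
                le_antisymm (hg 1 h1mem).2 (le_trans (le_of_eq hcg.symm) (min_le_right _ _))
              have hU11 : union g h 1 = 1 := by
                rw [hU1, hg11]
                exact max_eq_left (hh 1 h1mem).2
              rw [hfg1, hU11, min_self]
            have hmodh : ¬ min (f 1) (h 1) = 1 := by
              intro hch
              apply hA
              have hfh1 : f 1 = 1 :=
                le_antisymm (hf 1 h1mem).2 (le_trans (le_of_eq hch.symm) (min_le_left _ _))
              have hh11 : h 1 = 1 :=
                le_antisymm (hh 1 h1mem).2 (le_trans (le_of_eq hch.symm) (min_le_right _ _))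
              have hU11 : union g h 1 = 1 := by
                rw [hU1, hh11]
                exact max_eq_right (hg 1 h1mem).2
              rw [hfh1, hU11, min_self]
            have S1 : _root_.star f g 1 = 0 := aux_star_one_lt hf' hg' hmodg
            have T1 : _root_.star f h 1 = 0 := aux_star_one_lt hf' hh' hmodh
            symm
            apply le_antisymm
            · apply aux_union_le h1mem
              intro y hy z hz hm
              rcases max_choice y z with hc | hc
              · rw [hc] at hm
                rw [hm, S1]
                exact min_le_left _ _
              · rw [hc] at hm
                rw [hm, T1]
                exact min_le_right _ _
            · have e0 : (0:ℝ) ≤ min (_root_.star f g 1) (_root_.star f h 1) := by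
                rw [S1, T1, min_self]
              exact le_trans e0 (aux_le_union (aux_mapsI_star hf hg) h1mem h1mem (max_self 1))
end
end
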